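/- Let Q be the (n+1)×(n+1) matrix with Q(i,i) = -β_i and Q(i,n) = β_i for i < n (with β_i ≥ 0), Q(n,j) = 0 for all j, and all other entries zero (state n is the absorbing 'mask' state). Then for t ≥ 0, the matrix exponential exp(tQ) satisfies: exp(tQ)(i,i) = exp(-β_i t), exp(tQ)(i,n) = 1 - exp(-β_i t) for i < n, exp(tQ)(n,n) = 1, and all other entries are 0. -/

import Mathlib

open Matrix Finset

/-- Explicit matrix exponential of the absorbing rate matrix with per-state
masking rates `β i` (state `Fin.last n` is the absorbing mask state). -/
theorem exp_absorbing_rate_matrix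
    (n : ℕ) (β : Fin (n + 1) → ℝ) (hβ : ∀ i, 0 ≤ β i) (t : ℝ) (ht : 0 ≤ t)
    (Q : Matrix (Fin (n + 1)) (Fin (n + 1)) ℝ)
    (hQ : ∀ i j, Q i j =
      if i = Fin.last n then 0
      else if j = i then -β i
      else if j = Fin.last n then β i
      else 0) :
    ∀ i j, NormedSpace.exp (t • Q) i j =
      if i = Fin.last n then (if j = Fin.last n then 1 else 0)
      else if j = i then Real.exp (-(β i) * t)
      else if j = Fin.last n then 1 - Real.exp (-(β i) * t)
      else 0 := by
  set L := Fin.last n with hL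
  -- conjugating matrix and its inverse
  set U : Matrix (Fin (n + 1)) (Fin (n + 1)) ℝ :=
    fun i j => if j = i then 1 else if j = L then 1 else 0 with hU
  set V : Matrix (Fin (n + 1)) (Fin (n + 1)) ℝ :=
    fun i j => if j = i then 1 else if j = L then -1 else 0 with hV
  set d : Fin (n + 1) → ℝ := fun i => if i = L then 0 else -(β i) * t with hd
  have hUV : U * V = 1 := by
    ext i j
    rw [Matrix.mul_apply]
    rcases eq_or_ne i L with hi | hi
    · subst hi
      rw [Finset.sum_eq_single L]
      · simp [hU, hV, Matrix.one_apply]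
        rcases eq_or_ne j L with hj | hj
        · simp [hj]
        · simp [hj, Ne.symm hj]
      · intro k _ hk
        simp [hU, hk]
      · simp
    · rw [← Finset.sum_subset (Finset.subset_univ ({i, L} : Finset (Fin (n + 1))))
        (by
          intro k _ hk
          simp only [Finset.mem_insert, Finset.mem_singleton, not_or] at hk
          simp [hU, hk.1, hk.2])]
      rw [Finset.sum_pair hi]
      rcases eq_or_ne j i with hj | hj
      · subst hj
        simp [hU, hV, hi, Matrix.one_apply]
      · rcases eq_or_ne j L with hjL | hjL
        · subst hjL
          simp [hU, hV, hi, Ne.symm hi, hj, Matrix.one_apply, Ne.symm hj]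
        · simp [hU, hV, hi, hj, hjL, Matrix.one_apply, Ne.symm hj]
  have hUunit : IsUnit U := (Matrix.isUnit_iff_isUnit_det U).mpr (Matrix.isUnit_det_of_right_inverse hUV)
  have hUinv : U⁻¹ = V := Matrix.inv_eq_right_inv hUV
  -- the key factorization
  have hfact : t • Q = U * Matrix.diagonal d * V := by
    ext i j
    rw [Matrix.mul_assoc, Matrix.mul_apply]
    simp only [Matrix.smul_apply, smul_eq_mul, Matrix.diagonal_mul]
    rcases eq_or_ne i L with hi | hi
    · subst hi
      rw [Finset.sum_eq_single L]
      · simp [hU, hV, hd, hQ]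
      · intro k _ hk
        simp [hU, hk]
      · simp
    · rw [← Finset.sum_subset (Finset.subset_univ ({i, L} : Finset (Fin (n + 1))))
        (by
          intro k _ hk
          simp only [Finset.mem_insert, Finset.mem_singleton, not_or] at hk
          simp [hU, hk.1, hk.2])]
      rw [Finset.sum_pair hi]
      rcases eq_or_ne j i with hj | hj
      · subst hj
        simp [hU, hV, hd, hQ, hi, Matrix.diagonal_mul]
        ring
      · rcases eq_or_ne j L with hjL | hjL
        · subst hjL
          simp [hU, hV, hd, hQ, hi, hj, Ne.symm hi, Matrix.diagonal_mul]
          ring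
        · simp [hU, hV, hd, hQ, hi, hj, hjL, Matrix.diagonal_mul]
  have hexp : NormedSpace.exp (t • Q)
      = U * Matrix.diagonal (fun i => Real.exp (d i)) * V := by
    rw [hfact, ← hUinv, Matrix.exp_conj U (Matrix.diagonal d) hUunit,
      Matrix.exp_diagonal]
    rw [Pi.exp_def]
    simp_rw [Real.exp_eq_exp_ℝ]
  intro i j
  rw [hexp, Matrix.mul_assoc, Matrix.mul_apply]; simp only [Matrix.diagonal_mul]
  rcases eq_or_ne i L with hi | hi
  · subst hi
    rw [Finset.sum_eq_single L]
    · simp only [hU, hV, hd, Matrix.diagonal_mul, if_pos rfl, one_mul, Real.exp_zero]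
      rcases eq_or_ne j L with hj | hj <;> simp [hj, ← hL]
    · intro k _ hk
      simp [hU, hk]
    · simp
  · rw [← Finset.sum_subset (Finset.subset_univ ({i, L} : Finset (Fin (n + 1))))
      (by
        intro k _ hk
        simp only [Finset.mem_insert, Finset.mem_singleton, not_or] at hk
        simp [hU, hk.1, hk.2])]
    rw [Finset.sum_pair hi]
    rcases eq_or_ne j i with hj | hj
    · subst hj
      simp [hU, hV, hd, hi, Matrix.diagonal_mul, ← hL]
    · rcases eq_or_ne j L with hjL | hjL
      · subst hjL
        simp [hU, hV, hd, hi, hj, Ne.symm hi, Matrix.diagonal_mul, ← hL]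
        ring
      · simp [hU, hV, hd, hi, hj, hjL, Matrix.diagonal_mul, ← hL]
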